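/- There exist real numbers α and β with 1, α, β linearly independent over ℚ and a continuous function ρ : 𝕋¹ → ℂ such that the cylindrical vortex F : 𝕋¹ × ℂ → 𝕋¹ × ℂ, F(x,z) = (x + α, e^{2πiβ} z + ρ(x)), is topologically transitive; in fact the full orbit {F^n(0,0) : n ∈ ℤ} of the point (0,0) is dense in 𝕋¹ × ℂ. -/

import Mathlib

open Real

namespace VortexProof
noncomputable def ξ : ℝ := liouvilleNumber 3
theorem trans_ξ : Transcendental ℚ ξ := fun h =>
  (transcendental_liouvilleNumber (by norm_num)) ((IsFractionRing.isAlgebraic_iff ℤ ℚ ℝ).mpr h)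

theorem not_int (m l : ℤ) : (m : ℝ) * ξ - ξ ^ 2 ≠ (l : ℝ) := by
  intro h
  obtain ⟨a, ha⟩ : ∃ a : ℚ, (a : ℝ) = (l : ℝ) := ⟨l, by push_cast; rfl⟩
  obtain ⟨b, hb⟩ : ∃ b : ℚ, (b : ℝ) = (m : ℝ) := ⟨m, by push_cast; rfl⟩
  have h0 : Polynomial.aeval ξ (Polynomial.C a - Polynomial.C b * Polynomial.X
      + Polynomial.X ^ 2) = 0 := by
    simp only [map_add, map_sub, map_mul, Polynomial.aeval_C, Polynomial.aeval_X, map_pow]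
    rw [show ((algebraMap ℚ ℝ) a : ℝ) = (a : ℝ) from rfl,
      show ((algebraMap ℚ ℝ) b : ℝ) = (b : ℝ) from rfl, ha, hb]
    linarith [h]
  apply trans_ξ
  refine ⟨_, ?_, h0⟩
  intro hp
  have c2 := congrArg (Polynomial.coeff · 2) hp
  simp [Polynomial.coeff_C, Polynomial.coeff_C_mul, Polynomial.coeff_X_pow] at c2

theorem indep : LinearIndependent ℚ ![(1 : ℝ), ξ, ξ ^ 2] := by
  rw [Fintype.linearIndependent_iff]
  intro g hg
  simp [Fin.sum_univ_three, Rat.smul_def] at hg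
  have h0 : Polynomial.aeval ξ (Polynomial.C (g 0) + Polynomial.C (g 1) * Polynomial.X
      + Polynomial.C (g 2) * Polynomial.X ^ 2) = 0 := by
    simp only [map_add, map_mul, Polynomial.aeval_C, Polynomial.aeval_X, map_pow]
    simp only [show ∀ q : ℚ, ((algebraMap ℚ ℝ) q : ℝ) = (q : ℝ) from fun _ => rfl]
    linarith [hg]
  have hp : (Polynomial.C (g 0) + Polynomial.C (g 1) * Polynomial.X
      + Polynomial.C (g 2) * Polynomial.X ^ 2) = 0 := by
    by_contra hne
    exact trans_ξ ⟨_, hne, h0⟩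
  intro i
  have c0 := congrArg (Polynomial.coeff · 0) hp
  have c1 := congrArg (Polynomial.coeff · 1) hp
  have c2 := congrArg (Polynomial.coeff · 2) hp
  simp [Polynomial.coeff_C, Polynomial.coeff_C_mul, Polynomial.coeff_X_pow] at c0 c1 c2
  fin_cases i <;> simp [c0, c1, c2]
variable {α : ℝ}

theorem denseZ (hα : Irrational α) :
    DenseRange (fun n : ℤ => n • (α : AddCircle (1:ℝ))) := by
  set S : AddSubgroup ℝ := AddSubgroup.closure {1, α} with hS
  have hdS : Dense (S : Set ℝ) := by
    rcases S.dense_or_cyclic with h | ⟨a, ha⟩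
    · exact h
    · exfalso
      have h1 : (1:ℝ) ∈ S := AddSubgroup.subset_closure (by simp)
      have h2 : α ∈ S := AddSubgroup.subset_closure (by simp)
      rw [ha, AddSubgroup.mem_closure_singleton] at h1 h2
      obtain ⟨n, hn⟩ := h1
      obtain ⟨m, hm⟩ := h2
      have hn0 : (n : ℝ) ≠ 0 := by
        rintro h
        rw [zsmul_eq_mul, h, zero_mul] at hn; norm_num at hn
      apply hα
      refine ⟨(m : ℚ) / (n : ℚ), ?_⟩
      rw [zsmul_eq_mul] at hn hm
      have ha' : a = 1 / (n:ℝ) := by field_simp at hn ⊢; linarith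
      rw [← hm, ha']
      push_cast
      field_simp
  have hd : Dense ((↑· : ℝ → AddCircle (1:ℝ)) '' (S : Set ℝ)) := by
    rw [dense_iff_closure_eq]
    apply Set.eq_univ_of_univ_subset
    calc (Set.univ : Set (AddCircle (1:ℝ)))
        = (↑· : ℝ → AddCircle (1:ℝ)) '' Set.univ := by
          rw [Set.image_univ, Set.range_eq_univ.mpr QuotientAddGroup.mk_surjective]
      _ = (↑· : ℝ → AddCircle (1:ℝ)) '' (closure (S : Set ℝ)) := by
          rw [hdS.closure_eq]
      _ ⊆ closure ((↑· : ℝ → AddCircle (1:ℝ)) '' (S : Set ℝ)) :=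
          image_closure_subset_closure_image (continuous_quotient_mk')
  apply hd.mono
  rintro _ ⟨x, hx, rfl⟩
  have key : ∀ y ∈ S, ∃ n : ℤ, (y : AddCircle (1:ℝ)) = n • ((α : ℝ) : AddCircle (1:ℝ)) := by
    intro y hy
    refine AddSubgroup.closure_induction ?_ ?_ ?_ ?_ hy
    · rintro z (rfl | rfl)
      · exact ⟨0, by rw [zero_zsmul]; exact AddCircle.coe_period (1:ℝ)⟩
      · exact ⟨1, (one_zsmul _).symm⟩
    · exact ⟨0, by rw [zero_zsmul]; exact QuotientAddGroup.mk_zero _⟩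
    · rintro y z _ _ ⟨n, hn⟩ ⟨m, hm⟩
      refine ⟨n + m, ?_⟩
      rw [AddCircle.coe_add, hn, hm, add_zsmul]
    · rintro y _ ⟨n, hn⟩
      refine ⟨-n, ?_⟩
      have : ((-y : ℝ) : AddCircle (1:ℝ)) = -(y : AddCircle (1:ℝ)) := by
        rw [show (-y : ℝ) = (-1 : ℤ) • y by simp, AddCircle.coe_zsmul, neg_one_zsmul]
      rw [this, hn, neg_zsmul]
  obtain ⟨n, hn⟩ := key x hx
  exact ⟨n, hn.symm⟩

theorem denseN (hα : Irrational α) :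
    DenseRange (fun n : ℕ => n • (α : AddCircle (1:ℝ))) :=
  denseRange_zsmul_iff_nsmul.mp (denseZ hα)

noncomputable def pt (α : ℝ) (n : ℕ) : AddCircle (1:ℝ) := ((n : ℝ) * α : ℝ)

theorem pt_eq (n : ℕ) : pt α n = n • (α : AddCircle (1:ℝ)) := by
  rw [← AddCircle.coe_nsmul]
  unfold pt
  congr 1
  push_cast
  ring

theorem pt_succ (n : ℕ) : pt α (n + 1) = pt α n + (α : AddCircle (1:ℝ)) := by
  rw [pt_eq, pt_eq, succ_nsmul]

theorem exists_visit (hα : Irrational α) (V : Set (AddCircle (1:ℝ))) (hV : IsOpen V)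
    (hne : V.Nonempty) (N : ℕ) : ∃ n, N ≤ n ∧ pt α n ∈ V := by
  have h := (denseN hα).mono (Set.subset_univ _)
  have h2 : Dense (Set.range (fun n : ℕ => pt α (N + n))) := by
    have heq : Set.range (fun n : ℕ => pt α (N + n))
        = (Homeomorph.addLeft ((N : ℕ) • ((α:ℝ) : AddCircle (1:ℝ)))) ''
          (Set.range (fun n : ℕ => n • ((α:ℝ) : AddCircle (1:ℝ)))) := by
      rw [← Set.range_comp]
      refine congrArg _ (funext fun n => ?_)
      simp only [Function.comp_apply, Homeomorph.coe_addLeft]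
      rw [pt_eq, add_nsmul]
    rw [heq]
    exact (Homeomorph.addLeft _).isDenseEmbedding.dense_image.mpr (denseN hα)
  obtain ⟨x, hx, hxV⟩ := h2.exists_mem_open hV hne
  obtain ⟨n, rfl⟩ := hx
  exact ⟨N + n, Nat.le_add_right _ _, hxV⟩

variable {T : Type*} [MetricSpace T]

theorem bump_interpolation (ε : ℝ) (hε : 0 ≤ ε) (M : ℕ) (p : ℕ → T)
    (hp : ∀ i < M, ∀ j < M, p i = p j → i = j) (v : ℕ → ℂ) (hv : ∀ k < M, ‖v k‖ ≤ ε) :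
    ∃ g : C(T, ℂ), (∀ x, ‖g x‖ ≤ ε) ∧ ∀ k < M, g (p k) = v k := by
  classical
  set s : Finset (ℕ × ℕ) :=
    (Finset.range M ×ˢ Finset.range M).filter (fun q => p q.1 ≠ p q.2) with hs
  set r : ℝ := if h : s.Nonempty then s.inf' h (fun q => dist (p q.1) (p q.2)) / 2 else 1
    with hrdef
  have hr : 0 < r := by
    rw [hrdef]
    split
    · rename_i h
      have : ∀ q ∈ s, 0 < dist (p q.1) (p q.2) := by
        intro q hq
        rw [hs, Finset.mem_filter] at hq
        exact dist_pos.mpr hq.2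
      have h2 := (Finset.lt_inf'_iff (f := fun q => dist (p q.1) (p q.2)) h).mpr this
      linarith
    · norm_num
  have key : ∀ i, i < M → ∀ j, j < M → p i ≠ p j → 2 * r ≤ dist (p i) (p j) := by
    intro i hi j hj hne
    have hmem : (i, j) ∈ s := by
      rw [hs, Finset.mem_filter, Finset.mem_product]
      exact ⟨⟨Finset.mem_range.mpr hi, Finset.mem_range.mpr hj⟩, hne⟩
    rw [hrdef, dif_pos ⟨_, hmem⟩]
    have := Finset.inf'_le (fun q => dist (p q.1) (p q.2)) hmem
    linarith
  set bump : ℕ → T → ℝ := fun k x => max 0 (1 - dist x (p k) / r) with hbump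
  have hb01 : ∀ k x, 0 ≤ bump k x ∧ bump k x ≤ 1 := by
    intro k x
    refine ⟨le_max_left _ _, ?_⟩
    have h1 : 0 ≤ dist x (p k) / r := div_nonneg dist_nonneg hr.le
    rw [hbump]
    simp only [max_le_iff]
    constructor <;> [norm_num; linarith]
  have hbfar : ∀ k x, r ≤ dist x (p k) → bump k x = 0 := by
    intro k x h
    rw [hbump]
    simp only
    rw [max_eq_left]
    have := (div_le_div_iff_of_pos_right hr).mpr h
    rw [div_self hr.ne'] at this
    linarith
  have hbself : ∀ k, bump k (p k) = 1 := by
    intro k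
    rw [hbump]
    simp [dist_self]
  have hcont : Continuous (fun x : T =>
      ∑ k ∈ Finset.range M, v k * ((bump k x : ℝ) : ℂ)) := by
    refine continuous_finset_sum _ fun k _ => ?_
    refine continuous_const.mul (Complex.continuous_ofReal.comp ?_)
    exact continuous_const.max (continuous_const.sub
      ((continuous_id.dist continuous_const).div_const r))
  refine ⟨⟨_, hcont⟩, ?_, ?_⟩
  · -- norm bound
    intro x
    simp only [ContinuousMap.coe_mk]
    by_cases h : ∃ k ∈ Finset.range M, dist x (p k) < r
    · obtain ⟨k, hk, hkx⟩ := h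
      rw [Finset.sum_eq_single_of_mem k hk]
      · rw [norm_mul]
        have h1 := hb01 k x
        calc ‖v k‖ * ‖((bump k x : ℝ) : ℂ)‖ ≤ ε * 1 := by
              apply mul_le_mul (hv k (Finset.mem_range.mp hk)) ?_ (norm_nonneg _) hε
              rw [Complex.norm_real, Real.norm_eq_abs, abs_of_nonneg h1.1]
              exact h1.2
          _ = ε := mul_one ε
      · intro j hj hjk
        have hpj : p j ≠ p k := fun he =>
          hjk (hp j (Finset.mem_range.mp hj) k (Finset.mem_range.mp hk) he)
        have hfar : r ≤ dist x (p j) := by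
          by_contra hlt
          push_neg at hlt
          have := key j (Finset.mem_range.mp hj) k (Finset.mem_range.mp hk) hpj
          have htri := dist_triangle (p j) x (p k)
          rw [dist_comm (p j) x] at htri
          linarith
        rw [hbfar j x hfar]
        simp
    · push_neg at h
      have : ∀ k ∈ Finset.range M, v k * ((bump k x : ℝ) : ℂ) = 0 := by
        intro k hk
        rw [hbfar k x (h k hk)]
        simp
      rw [Finset.sum_eq_zero this]
      simpa using hε
  · -- values
    intro k hk
    simp only [ContinuousMap.coe_mk]
    rw [Finset.sum_eq_single_of_mem k (Finset.mem_range.mpr hk)]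
    · rw [hbself k]
      simp
    · intro j hj hjk
      have hpj : p j ≠ p k := fun he => hjk (hp j (Finset.mem_range.mp hj) k hk he)
      have hfar : r ≤ dist (p k) (p j) := by
        have := key k hk j (Finset.mem_range.mp hj) (fun he => hjk (hp j (Finset.mem_range.mp hj) k hk he.symm))
        linarith
      rw [hbfar j (p k) hfar]
      simp


noncomputable def vortex (lam : ℂ) (hlam : lam ≠ 0) (α : ℝ)
    (ρ : C(AddCircle (1:ℝ), ℂ)) : Equiv.Perm (AddCircle (1:ℝ) × ℂ) where
  toFun p := (p.1 + (α : AddCircle (1:ℝ)), lam * p.2 + ρ p.1)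
  invFun q := (q.1 - (α : AddCircle (1:ℝ)), (q.2 - ρ (q.1 - (α : AddCircle (1:ℝ)))) / lam)
  left_inv p := by
    ext
    · simp
    · simp only [add_sub_cancel_right]
      field_simp
  right_inv q := by
    ext
    · simp
    · simp only [sub_add_cancel]
      field_simp
      ring

noncomputable def Sseq (lam : ℂ) (α : ℝ) (ρ : C(AddCircle (1:ℝ), ℂ)) : ℕ → ℂ
  | 0 => 0
  | n+1 => lam * Sseq lam α ρ n + ρ (pt α n)

variable {lam : ℂ} {α : ℝ}

theorem pt_succ' (n : ℕ) : pt α (n + 1) = pt α n + (α : AddCircle (1:ℝ)) := by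
  unfold pt
  rw [← AddCircle.coe_add]
  congr 1
  push_cast
  ring

theorem vortex_pow_apply (hlam : lam ≠ 0) (ρ : C(AddCircle (1:ℝ), ℂ)) (n : ℕ) :
    ((vortex lam hlam α ρ) ^ n) ((0 : AddCircle (1:ℝ)), (0 : ℂ)) = (pt α n, Sseq lam α ρ n) := by
  induction n with
  | zero =>
    simp only [pow_zero, Equiv.Perm.coe_one, id_eq, Sseq]
    unfold pt
    norm_num
  | succ n ih =>
    rw [pow_succ', Equiv.Perm.mul_apply, ih]
    show (pt α n + _, lam * Sseq lam α ρ n + ρ (pt α n)) = _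
    rw [← pt_succ']
    rfl

theorem Sseq_add (ρ g : C(AddCircle (1:ℝ), ℂ)) (n : ℕ) :
    Sseq lam α (ρ + g) n = Sseq lam α ρ n + Sseq lam α g n := by
  induction n with
  | zero => simp [Sseq]
  | succ n ih => simp only [Sseq, ih, ContinuousMap.add_apply]; ring

theorem Sseq_smul (c : ℂ) (ρ : C(AddCircle (1:ℝ), ℂ)) (n : ℕ) :
    Sseq lam α (c • ρ) n = c * Sseq lam α ρ n := by
  induction n with
  | zero => simp [Sseq]
  | succ n ih => simp only [Sseq, ih, ContinuousMap.smul_apply, smul_eq_mul]; ring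

theorem Sseq_zero (n : ℕ) : Sseq lam α (0 : C(AddCircle (1:ℝ), ℂ)) n = 0 := by
  induction n with
  | zero => simp [Sseq]
  | succ n ih => simp [Sseq, ih]

theorem Sseq_continuous (n : ℕ) : Continuous (fun ρ : C(AddCircle (1:ℝ), ℂ) => Sseq lam α ρ n) := by
  induction n with
  | zero => simpa [Sseq] using continuous_const
  | succ n ih =>
    exact (continuous_const.mul ih).add (continuous_eval_const (pt α n))

theorem Sseq_eq_sum (ρ : C(AddCircle (1:ℝ), ℂ)) (n : ℕ) :
    Sseq lam α ρ n = ∑ k ∈ Finset.range n, lam ^ (n - 1 - k) * ρ (pt α k) := by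
  induction n with
  | zero => simp [Sseq]
  | succ n ih =>
    rw [Finset.sum_range_succ]
    have h1 : (n + 1) - 1 - n = 0 := by omega
    rw [h1, pow_zero, one_mul]
    show lam * Sseq lam α ρ n + ρ (pt α n) = _
    rw [ih, Finset.mul_sum]
    congr 1
    refine Finset.sum_congr rfl fun k hk => ?_
    have hk' := Finset.mem_range.mp hk
    rw [← mul_assoc, ← pow_succ']
    congr 2
    omega




instance : Fact ((0:ℝ) < 1) := ⟨one_pos⟩

variable {β : ℝ}

theorem fourier_pt (m : ℤ) (k : ℕ) :
    (fourier m : C(AddCircle (1:ℝ), ℂ)) (pt α k) = Complex.exp (2 * π * Complex.I * m * α) ^ k := by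
  unfold pt
  rw [fourier_coe_apply]
  rw [← Complex.exp_nat_mul]
  congr 1
  push_cast
  ring

theorem Sseq_fourier_bound (hβ : ∀ m l : ℤ, (m : ℝ) * α - β ≠ (l : ℝ)) (m : ℤ) :
    ∃ C : ℝ, 0 ≤ C ∧ ∀ n, ‖Sseq (Complex.exp (2 * π * Complex.I * β)) α
      (fourier m : C(AddCircle (1:ℝ), ℂ)) n‖ ≤ C := by
  set lam : ℂ := Complex.exp (2 * π * Complex.I * β) with hlam
  set μ : ℂ := Complex.exp (2 * π * Complex.I * m * α) with hμ
  have hlam0 : lam ≠ 0 := Complex.exp_ne_zero _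
  have hlamnorm : ‖lam‖ = 1 := by
    rw [hlam, Complex.norm_exp]
    norm_num [Complex.mul_re, Complex.mul_im]
  have hμnorm : ‖μ‖ = 1 := by
    rw [hμ, Complex.norm_exp]
    norm_num [Complex.mul_re, Complex.mul_im]
  have hrnorm : ‖μ / lam‖ = 1 := by rw [norm_div, hμnorm, hlamnorm, div_one]
  have hr1 : μ / lam ≠ 1 := by
    intro h
    rw [hμ, hlam, ← Complex.exp_sub] at h
    rw [Complex.exp_eq_one_iff] at h
    obtain ⟨l, hl⟩ := h
    apply hβ m l
    have h2 : (2 * π * Complex.I * m * α - 2 * π * Complex.I * β)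
        = (2 * π * Complex.I) * ((m : ℂ) * α - β) := by ring
    have h3 : ((l : ℂ)) * (2 * π * Complex.I) = (2 * π * Complex.I) * (l : ℂ) := by ring
    rw [h2, h3] at hl
    have h2pi : (2 * π * Complex.I : ℂ) ≠ 0 := by
      simp [Complex.I_ne_zero, Real.pi_ne_zero, Complex.ofReal_ne_zero]
    have h4 := mul_left_cancel₀ h2pi hl
    have := congrArg Complex.re h4
    simpa using this
  set D : ℝ := ‖μ / lam - 1‖ with hD
  have hD0 : 0 < D := by
    rw [hD, norm_pos_iff]
    exact sub_ne_zero.mpr hr1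
  refine ⟨2 / D, by positivity, fun n => ?_⟩
  rw [Sseq_eq_sum]
  have hterm : ∀ k ∈ Finset.range n,
      lam ^ (n - 1 - k) * (fourier m : C(AddCircle (1:ℝ), ℂ)) (pt α k)
        = lam ^ (n - 1) * (μ / lam) ^ k := by
    intro k hk
    have hk' := Finset.mem_range.mp hk
    rw [fourier_pt, ← hμ]
    have h5 : n - 1 - k = (n - 1) - k := rfl
    rw [h5, pow_sub₀ lam hlam0 (by omega : k ≤ n - 1)]
    rw [div_pow]
    field_simp
  rw [Finset.sum_congr rfl hterm, ← Finset.mul_sum, geom_sum_eq hr1]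
  rw [norm_mul, norm_pow, hlamnorm, one_pow, one_mul, norm_div]
  rw [← hD]
  have hnum : ‖(μ / lam) ^ n - 1‖ ≤ 2 := by
    calc ‖(μ / lam) ^ n - 1‖ ≤ ‖(μ / lam) ^ n‖ + ‖(1:ℂ)‖ := norm_sub_le _ _
      _ = 2 := by rw [norm_pow, hrnorm, one_pow, norm_one]; norm_num
  gcongr


variable {α β : ℝ}

theorem pt_inj (hα : Irrational α) (i j : ℕ) (h : pt α i = pt α j) : i = j := by
  by_contra hne
  unfold pt at h
  rw [QuotientAddGroup.eq_iff_sub_mem, AddSubgroup.mem_zmultiples_iff] at h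
  obtain ⟨l, hl⟩ := h
  rw [zsmul_eq_mul, mul_one] at hl
  have hij : (i : ℝ) - (j : ℝ) ≠ 0 := by
    rw [sub_ne_zero]
    exact_mod_cast hne
  apply hα
  refine ⟨(l : ℚ) / ((i : ℚ) - (j : ℚ)), ?_⟩
  push_cast
  rw [div_eq_iff hij]
  linarith [hl]

theorem span_bound (hβ : ∀ m l : ℤ, (m : ℝ) * α - β ≠ (l : ℝ))
    (ρ : C(AddCircle (1:ℝ), ℂ)) (hρ : ρ ∈ Submodule.span ℂ (Set.range fourier)) :
    ∃ C : ℝ, 0 ≤ C ∧ ∀ n, ‖Sseq (Complex.exp (2 * π * Complex.I * β)) α ρ n‖ ≤ C := by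
  induction hρ using Submodule.span_induction with
  | mem x h =>
    obtain ⟨m, rfl⟩ := h
    exact Sseq_fourier_bound hβ m
  | zero => exact ⟨0, le_refl 0, fun n => by rw [Sseq_zero]; simp⟩
  | add x y hx hy ihx ihy =>
    obtain ⟨C1, h10, h1⟩ := ihx
    obtain ⟨C2, h20, h2⟩ := ihy
    exact ⟨C1 + C2, by positivity, fun n => by
      rw [Sseq_add]
      exact (norm_add_le _ _).trans (add_le_add (h1 n) (h2 n))⟩
  | smul a x hx ihx =>
    obtain ⟨C, hC0, hC⟩ := ihx
    exact ⟨‖a‖ * C, by positivity, fun n => by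
      rw [Sseq_smul, norm_mul]
      exact mul_le_mul_of_nonneg_left (hC n) (norm_nonneg a)⟩

theorem dense_G (hα : Irrational α) (hβ : ∀ m l : ℤ, (m : ℝ) * α - β ≠ (l : ℝ))
    (U : Set (AddCircle (1:ℝ) × ℂ)) (hUo : IsOpen U) (hUne : U.Nonempty) :
    Dense {ρ : C(AddCircle (1:ℝ), ℂ) |
      ∃ n : ℕ, (pt α n, Sseq (Complex.exp (2 * π * Complex.I * β)) α ρ n) ∈ U} := by
  set lam : ℂ := Complex.exp (2 * π * Complex.I * β) with hlamdef
  have hlam0 : lam ≠ 0 := Complex.exp_ne_zero _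
  have hlamnorm : ‖lam‖ = 1 := by
    rw [hlamdef, Complex.norm_exp]
    norm_num [Complex.mul_re, Complex.mul_im]
  rw [Metric.dense_iff]
  intro ρ₀ ε hε
  obtain ⟨⟨x0, z0⟩, hx0⟩ := hUne
  obtain ⟨V, W, hVo, hWo, hx0V, hz0W, hVW⟩ := isOpen_prod_iff.mp hUo x0 z0 hx0
  have hρ₀cl : ρ₀ ∈ closure ((Submodule.span ℂ (Set.range fourier) :
      Submodule ℂ C(AddCircle (1:ℝ), ℂ)) : Set C(AddCircle (1:ℝ), ℂ)) := by
    rw [← Submodule.topologicalClosure_coe, span_fourier_closure_eq_top]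
    trivial
  obtain ⟨ρ₁, hρ₁mem, hρ₁close⟩ := Metric.mem_closure_iff.mp hρ₀cl (ε/3) (by positivity)
  obtain ⟨C, hC0, hC⟩ := span_bound hβ ρ₁ hρ₁mem
  set m : ℕ := ⌈(C + ‖z0‖) / (ε/3)⌉₊ + 1 with hmdef
  have hm0 : 0 < m := Nat.succ_pos _
  have hmbound : C + ‖z0‖ ≤ (m : ℝ) * (ε/3) := by
    have h1 : (C + ‖z0‖) / (ε/3) ≤ ((⌈(C + ‖z0‖) / (ε/3)⌉₊ : ℕ) : ℝ) := Nat.le_ceil _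
    have h2 : ((⌈(C + ‖z0‖) / (ε/3)⌉₊ : ℕ) : ℝ) ≤ (m : ℝ) := by
      rw [hmdef]; push_cast; linarith
    have h3 : (C + ‖z0‖) / (ε/3) ≤ (m : ℝ) := h1.trans h2
    rw [div_le_iff₀ (by positivity : (0:ℝ) < ε/3)] at h3
    linarith
  obtain ⟨n, hmn, hnV⟩ := exists_visit hα V hVo ⟨x0, hx0V⟩ m
  set d : ℂ := z0 - Sseq lam α ρ₁ n with hddef
  have hdnorm : ‖d‖ ≤ (m : ℝ) * (ε/3) := by
    refine le_trans ?_ hmbound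
    calc ‖d‖ ≤ ‖z0‖ + ‖Sseq lam α ρ₁ n‖ := norm_sub_le _ _
      _ ≤ C + ‖z0‖ := by linarith [hC n]
  set v : ℕ → ℂ := fun k => if k < m then (lam ^ (n - 1 - k))⁻¹ * (d / (m : ℂ)) else 0 with hvdef
  have hvnorm : ∀ k, k < n → ‖v k‖ ≤ ε/3 := by
    intro k hk
    rw [hvdef]
    by_cases hkm : k < m
    · simp only [if_pos hkm]
      rw [norm_mul, norm_inv, norm_pow, hlamnorm, one_pow, inv_one, one_mul, norm_div]
      rw [div_le_iff₀ (by exact_mod_cast hm0 : (0:ℝ) < ‖(m:ℂ)‖)]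
      have : ‖(m : ℂ)‖ = (m : ℝ) := by
        rw [Complex.norm_natCast]
      rw [this]
      linarith [hdnorm]
    · simp only [if_neg hkm, norm_zero]
      positivity
  obtain ⟨g, hgnorm, hgval⟩ := bump_interpolation (ε/3) (by positivity) n (pt α)
    (fun i _ j _ h => pt_inj hα i j h) v hvnorm
  refine ⟨ρ₁ + g, ?_, ⟨n, ?_⟩⟩
  · rw [Metric.mem_ball]
    have h1 : dist (ρ₁ + g) ρ₁ ≤ ε/3 := by
      rw [dist_eq_norm, add_sub_cancel_left]
      exact (ContinuousMap.norm_le _ (by positivity)).mpr hgnorm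
    have h2 : dist ρ₁ ρ₀ < ε/3 := by rw [dist_comm]; exact hρ₁close
    calc dist (ρ₁ + g) ρ₀ ≤ dist (ρ₁ + g) ρ₁ + dist ρ₁ ρ₀ := dist_triangle _ _ _
      _ < ε/3 + ε/3 := by linarith
      _ < ε := by linarith
  · apply hVW
    have hSg : Sseq lam α g n = d := by
      rw [Sseq_eq_sum]
      have hterm : ∀ k ∈ Finset.range n,
          lam ^ (n - 1 - k) * g (pt α k) = if k < m then d / (m : ℂ) else 0 := by
        intro k hk
        rw [hgval k (Finset.mem_range.mp hk), hvdef]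
        by_cases hkm : k < m
        · simp only [if_pos hkm]
          rw [← mul_assoc, mul_inv_cancel₀ (pow_ne_zero _ hlam0), one_mul]
        · simp [if_neg hkm]
      rw [Finset.sum_congr rfl hterm, ← Finset.sum_filter]
      have hfil : (Finset.range n).filter (· < m) = Finset.range m := by
        ext k
        simp only [Finset.mem_filter, Finset.mem_range]
        omega
      rw [hfil, Finset.sum_const, Finset.card_range, nsmul_eq_mul]
      rw [mul_div_cancel₀]
      exact Nat.cast_ne_zero.mpr hm0.ne'
    have hz : Sseq lam α (ρ₁ + g) n = z0 := by
      rw [Sseq_add, hSg, hddef]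
      ring
    rw [hz]
    exact Set.mem_prod.mpr ⟨hnV, hz0W⟩

set_option synthInstance.maxHeartbeats 1000000 in
theorem main_orbit (hα : Irrational α) (hβ : ∀ m l : ℤ, (m : ℝ) * α - β ≠ (l : ℝ)) :
    ∃ ρ : C(AddCircle (1:ℝ), ℂ),
      Dense {q : AddCircle (1 : ℝ) × ℂ |
        ∃ n : ℤ, ((vortex (Complex.exp (2 * π * Complex.I * β)) (Complex.exp_ne_zero _) α ρ) ^ n)
          ((0 : AddCircle (1 : ℝ)), (0 : ℂ)) = q} := by
  set lam : ℂ := Complex.exp (2 * π * Complex.I * β) with hlamdef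
  obtain ⟨b, hbc, hbne, hbasis⟩ := TopologicalSpace.exists_countable_basis (AddCircle (1:ℝ) × ℂ)
  set Gs : Set (AddCircle (1:ℝ) × ℂ) → Set C(AddCircle (1:ℝ), ℂ) :=
    fun U => {ρ | ∃ n : ℕ, (pt α n, Sseq lam α ρ n) ∈ U} with hGsdef
  have hGopen : ∀ U ∈ b, IsOpen (Gs U) := by
    intro U hU
    have : Gs U = ⋃ n : ℕ, (fun ρ => ((pt α n, Sseq lam α ρ n) : AddCircle (1:ℝ) × ℂ)) ⁻¹' U := by
      ext ρ; simp [hGsdef, Set.mem_iUnion]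
    rw [this]
    refine isOpen_iUnion fun n => ?_
    exact (hbasis.isOpen hU).preimage (continuous_const.prodMk (Sseq_continuous n))
  have hGdense : ∀ U ∈ b, Dense (Gs U) := by
    intro U hU
    refine dense_G hα hβ U (hbasis.isOpen hU) ?_
    rw [Set.nonempty_iff_ne_empty]
    exact fun h => hbne (h ▸ hU)
  have hint : Dense (⋂₀ (Gs '' b)) := by
    refine dense_sInter_of_isOpen ?_ (hbc.image _) ?_
    · rintro s ⟨U, hU, rfl⟩; exact hGopen U hU
    · rintro s ⟨U, hU, rfl⟩; exact hGdense U hU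
  obtain ⟨ρ, hρ⟩ := hint.nonempty
  refine ⟨ρ, ?_⟩
  rw [hbasis.dense_iff]
  intro o ho hone
  have hρo : ρ ∈ Gs o := hρ _ ⟨o, ho, rfl⟩
  obtain ⟨n, hn⟩ := hρo
  refine ⟨(pt α n, Sseq lam α ρ n), hn, ⟨(n : ℤ), ?_⟩⟩
  rw [zpow_natCast, vortex_pow_apply]

end VortexProof

open VortexProof in
/-- There exist `α, β` with `1, α, β` rationally independent and a continuous
`ρ : 𝕋¹ → ℂ` such that the cylindrical vortex `F(x,z) = (x + α, e^{2πiβ} z + ρ(x))` on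
`𝕋¹ × ℂ` is topologically transitive; in fact, the full orbit of `(0,0)` is dense. -/
theorem exists_transitive_vortex :
    ∃ (α β : ℝ), LinearIndependent ℚ ![(1 : ℝ), α, β] ∧
      ∃ ρ : AddCircle (1 : ℝ) → ℂ, Continuous ρ ∧
        ∃ F : Equiv.Perm (AddCircle (1 : ℝ) × ℂ),
          (∀ p : AddCircle (1 : ℝ) × ℂ,
            F p = (p.1 + (α : AddCircle (1 : ℝ)),
              Complex.exp (2 * π * Complex.I * β) * p.2 + ρ p.1)) ∧
          Dense {q : AddCircle (1 : ℝ) × ℂ |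
            ∃ n : ℤ, (F ^ n) ((0 : AddCircle (1 : ℝ)), (0 : ℂ)) = q} := by
  refine ⟨ξ, ξ ^ 2, indep, ?_⟩
  obtain ⟨ρ, hρ⟩ := main_orbit (β := ξ ^ 2) trans_ξ.irrational not_int
  refine ⟨⇑ρ, ρ.continuous,
    vortex (Complex.exp (2 * π * Complex.I * ((ξ^2 : ℝ) : ℂ))) (Complex.exp_ne_zero _) ξ ρ,
    fun p => ?_, ?_⟩
  · rfl
  · exact hρ
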